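/- Let f(x) = Σ_{k=0}^n a_k x^k be a real polynomial with nonnegative coefficients all of whose roots are real. Then the coefficient sequence is log-concave: a_k^2 ≥ a_{k-1} a_{k+1} for all 1 ≤ k ≤ n-1. -/
import Mathlib

open Polynomial

private def NGood (g : Polynomial ℝ) : Prop :=
  (∀ k, 0 ≤ g.coeff k) ∧
  (∀ j i k, j ≤ i → i ≤ k → g.coeff j ≠ 0 → g.coeff k ≠ 0 → g.coeff i ≠ 0) ∧
  (∀ k, g.coeff k * g.coeff (k + 2) ≤ g.coeff (k + 1) ^ 2)

private lemma ncoeff_zero (g : Polynomial ℝ) (r : ℝ) :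
    ((X + C r) * g).coeff 0 = r * g.coeff 0 := by
  rw [mul_coeff_zero]; simp

private lemma ncoeff_succ (g : Polynomial ℝ) (r : ℝ) (n : ℕ) :
    ((X + C r) * g).coeff (n + 1) = g.coeff n + r * g.coeff (n + 1) := by
  rw [add_mul, coeff_add, coeff_X_mul, coeff_C_mul]

private lemma nstep (g : Polynomial ℝ) (r : ℝ) (hr : 0 ≤ r) (hG : NGood g) :
    NGood ((X + C r) * g) := by
  obtain ⟨h0, hQ, hLC⟩ := hG
  have pos : ∀ {k : ℕ}, g.coeff k ≠ 0 → 0 < g.coeff k :=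
    fun h => (h0 _).lt_of_ne (Ne.symm h)
  -- middle lemma
  have mid : ∀ j, g.coeff j * g.coeff (j + 3) ≤ g.coeff (j + 1) * g.coeff (j + 2) := by
    intro j
    by_cases h3 : g.coeff (j + 3) = 0
    · rw [h3, mul_zero]; exact mul_nonneg (h0 _) (h0 _)
    by_cases hj : g.coeff j = 0
    · rw [hj, zero_mul]; exact mul_nonneg (h0 _) (h0 _)
    have h1 := pos (hQ j (j + 1) (j + 3) (by omega) (by omega) hj h3)
    have h2 := pos (hQ j (j + 2) (j + 3) (by omega) (by omega) hj h3)
    nlinarith [mul_le_mul (hLC j) (hLC (j + 1)) (mul_nonneg (h0 _) (h0 _)) (sq_nonneg _),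
      mul_pos h1 h2, pos hj, pos h3]
  refine ⟨?_, ?_, ?_⟩
  · intro k
    cases k with
    | zero => rw [ncoeff_zero]; exact mul_nonneg hr (h0 0)
    | succ n => rw [ncoeff_succ]; exact add_nonneg (h0 n) (mul_nonneg hr (h0 _))
  · intro j i k hji hik hj hk
    rcases Nat.eq_or_lt_of_le hji with rfl | hji'
    · exact hj
    rcases Nat.eq_or_lt_of_le hik with rfl | hik'
    · exact hk
    obtain ⟨i', rfl⟩ : ∃ i', i = i' + 1 := ⟨i - 1, by omega⟩
    obtain ⟨k', rfl⟩ : ∃ k', k = k' + 1 := ⟨k - 1, by omega⟩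
    rw [ncoeff_succ] at hk ⊢
    have hK : ∃ K, i' + 1 ≤ K ∧ g.coeff K ≠ 0 := by
      by_cases h : g.coeff k' = 0
      · refine ⟨k' + 1, by omega, fun hz => hk ?_⟩
        rw [h, hz, mul_zero, add_zero]
      · exact ⟨k', by omega, h⟩
    obtain ⟨K, hKge, hKne⟩ := hK
    have fin1 : g.coeff i' ≠ 0 →
        g.coeff i' + r * g.coeff (i' + 1) ≠ 0 := fun h =>
      (add_pos_of_pos_of_nonneg (pos h) (mul_nonneg hr (h0 _))).ne'
    have fin2 : r ≠ 0 → g.coeff (i' + 1) ≠ 0 →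
        g.coeff i' + r * g.coeff (i' + 1) ≠ 0 := fun hrne h =>
      (add_pos_of_nonneg_of_pos (h0 _)
        (mul_pos (hr.lt_of_ne (Ne.symm hrne)) (pos h))).ne'
    cases j with
    | zero =>
      rw [ncoeff_zero] at hj
      have hrne : r ≠ 0 := fun h => hj (by rw [h, zero_mul])
      have ha0 : g.coeff 0 ≠ 0 := fun h => hj (by rw [h, mul_zero])
      exact fin2 hrne (hQ 0 (i' + 1) K (by omega) hKge ha0 hKne)
    | succ j' =>
      rw [ncoeff_succ] at hj
      by_cases hj0 : g.coeff j' = 0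
      · have hrne : r ≠ 0 := fun h => hj (by rw [hj0, h, zero_mul, add_zero])
        have ha : g.coeff (j' + 1) ≠ 0 := fun h => hj (by rw [hj0, h, mul_zero, add_zero])
        exact fin2 hrne (hQ (j' + 1) (i' + 1) K (by omega) hKge ha hKne)
      · exact fin1 (hQ j' i' K (by omega) (by omega) hj0 hKne)
  · intro k
    cases k with
    | zero =>
      rw [ncoeff_zero, ncoeff_succ, ncoeff_succ]
      nlinarith [hLC 0, h0 0, h0 1, h0 2, mul_nonneg hr hr, sq_nonneg (g.coeff 0),
        mul_nonneg (mul_nonneg hr (h0 0)) (h0 1)]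
    | succ n =>
      rw [ncoeff_succ, ncoeff_succ, ncoeff_succ]
      have m1 := mul_le_mul_of_nonneg_left (mid n) hr
      have m2 := mul_le_mul_of_nonneg_left (hLC (n + 1)) (mul_nonneg hr hr)
      have m0 := hLC n
      show (g.coeff n + r * g.coeff (n + 1)) * (g.coeff (n + 2) + r * g.coeff (n + 2 + 1))
          ≤ (g.coeff (n + 1) + r * g.coeff (n + 1 + 1)) ^ 2
      nlinarith [m0, m1, m2]

private lemma nmain (n : ℕ) : ∀ f : Polynomial ℝ, f.natDegree = n → 0 ≤ f.leadingCoeff →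
    (∀ z : ℂ, (f.map (algebraMap ℝ ℂ)).IsRoot z → z.im = 0 ∧ z.re ≤ 0) → NGood f := by
  induction n with
  | zero =>
    intro f hdeg hlc _
    have hf : f = C (f.coeff 0) := eq_C_of_natDegree_eq_zero hdeg
    have h00 : 0 ≤ f.coeff 0 := by
      have : f.leadingCoeff = f.coeff 0 := by rw [leadingCoeff, hdeg]
      rwa [this] at hlc
    refine ⟨?_, ?_, ?_⟩
    · intro k
      rw [hf, coeff_C]
      split <;> simp [h00]
    · intro j i k hji hik hj hk
      rw [hf, coeff_C] at hj hk ⊢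
      have hj0 : j = 0 := by by_contra h; simp [h] at hj
      have hk0 : k = 0 := by by_contra h; simp [h] at hk
      have hi0 : i = 0 := by omega
      subst hj0
      simpa [hi0] using hj
    · intro k
      rw [hf]
      have : (C (f.coeff 0)).coeff (k + 2) = 0 := by rw [coeff_C]; simp
      rw [this, mul_zero]
      exact sq_nonneg _
  | succ n ih =>
    intro f hdeg hlc hroots
    have hf0 : f ≠ 0 := fun h => by simp [h] at hdeg
    have hmap0 : f.map (algebraMap ℝ ℂ) ≠ 0 := Polynomial.map_ne_zero hf0
    have hdegmap : (f.map (algebraMap ℝ ℂ)).natDegree = n + 1 := by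
      rw [natDegree_map]; exact hdeg
    have hdpos : 0 < (f.map (algebraMap ℝ ℂ)).degree :=
      natDegree_pos_iff_degree_pos.mp (by omega)
    obtain ⟨z, hz⟩ := Complex.exists_root hdpos
    obtain ⟨him, hre⟩ := hroots z hz
    have hzeq : z = ((z.re : ℝ) : ℂ) := Complex.ext rfl (by simp [him])
    set x := z.re with hx
    have hxroot : f.IsRoot x := by
      have h1 : eval₂ (algebraMap ℝ ℂ) (algebraMap ℝ ℂ x) f = 0 := by
        rw [← eval_map]
        show eval ((x : ℝ) : ℂ) (f.map (algebraMap ℝ ℂ)) = 0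
        rw [← hzeq]; exact hz
      rw [eval₂_at_apply] at h1
      exact_mod_cast map_eq_zero_iff _ (algebraMap ℝ ℂ).injective |>.mp h1
    obtain ⟨g, hg⟩ := dvd_iff_isRoot.mpr hxroot
    have hg0 : g ≠ 0 := fun h => hf0 (by rw [hg, h, mul_zero])
    have hdegg : g.natDegree = n := by
      have := natDegree_mul (X_sub_C_ne_zero x) hg0
      rw [← hg, natDegree_X_sub_C, hdeg] at this
      omega
    have hlcg : 0 ≤ g.leadingCoeff := by
      have : f.leadingCoeff = g.leadingCoeff := by
        rw [hg, leadingCoeff_mul, (monic_X_sub_C x).leadingCoeff, one_mul]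
      rwa [this] at hlc
    have hrootsg : ∀ w : ℂ, (g.map (algebraMap ℝ ℂ)).IsRoot w → w.im = 0 ∧ w.re ≤ 0 := by
      intro w hw
      apply hroots w
      rw [hg, Polynomial.map_mul]
      simp only [IsRoot, eval_mul] at hw ⊢
      rw [hw, mul_zero]
    have hGood := ih g hdegg hlcg hrootsg
    have hfeq : f = (X + C (-x)) * g := by
      rw [hg, map_neg, sub_eq_add_neg]
    rw [hfeq]
    exact nstep g (-x) (by linarith) hGood

theorem newton_log_concave (f : Polynomial ℝ)
    (hcoeff : ∀ k, 0 ≤ f.coeff k)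
    (hroots : ∀ z : ℂ, (f.map (algebraMap ℝ ℂ)).IsRoot z → z.im = 0) :
    ∀ k, 1 ≤ k → k ≤ f.natDegree - 1 →
      f.coeff k ^ 2 ≥ f.coeff (k - 1) * f.coeff (k + 1) := by
  by_cases hf0 : f = 0
  · intro k _ _
    simp [hf0]
  have hlc : 0 ≤ f.leadingCoeff := hcoeff _
  have hlcpos : 0 < f.leadingCoeff :=
    hlc.lt_of_ne (fun h => hf0 (leadingCoeff_eq_zero.mp h.symm))
  have hroots' : ∀ z : ℂ, (f.map (algebraMap ℝ ℂ)).IsRoot z → z.im = 0 ∧ z.re ≤ 0 := by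
    intro z hz
    refine ⟨hroots z hz, ?_⟩
    by_contra hpos
    push_neg at hpos
    set x := z.re with hx
    have hzeq : z = ((x : ℝ) : ℂ) := Complex.ext rfl (by simp [hroots z hz])
    have hxroot : f.eval x = 0 := by
      have h1 : eval₂ (algebraMap ℝ ℂ) (algebraMap ℝ ℂ x) f = 0 := by
        rw [← eval_map]
        show eval ((x : ℝ) : ℂ) (f.map (algebraMap ℝ ℂ)) = 0
        rw [← hzeq]; exact hz
      rw [eval₂_at_apply] at h1
      exact_mod_cast map_eq_zero_iff _ (algebraMap ℝ ℂ).injective |>.mp h1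
    have hevpos : 0 < f.eval x := by
      rw [eval_eq_sum_range]
      apply Finset.sum_pos'
      · intro i _
        exact mul_nonneg (hcoeff i) (pow_nonneg hpos.le i)
      · exact ⟨f.natDegree, Finset.self_mem_range_succ _,
          mul_pos hlcpos (pow_pos hpos _)⟩
    rw [hxroot] at hevpos
    exact lt_irrefl 0 hevpos
  obtain ⟨-, -, hLC⟩ := nmain f.natDegree f rfl hlc hroots'
  intro k hk1 _
  obtain ⟨j, rfl⟩ : ∃ j, k = j + 1 := ⟨k - 1, by omega⟩
  have := hLC j
  simpa [ge_iff_le, Nat.add_sub_cancel] using this
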